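/- The inverse entries of the Fefferman-type matrix F recover the inverse Levi matrix: Σ_{A,B=0}^{2n} F^{AB} λ^α_A λ^{β̄}_B = g^{αβ̄} for all 1 ≤ α, β ≤ n, where (g^{αβ̄}) is the unique family of complex numbers with Σ_{β=1}^{n} g^{αβ̄} g_{γβ̄} = δ^α_γ for all α, γ; moreover Σ_{A,B=0}^{2n} F^{AB} λ^α_A λ^β_B = 0 for all 1 ≤ α, β ≤ n. -/

import Mathlib

open scoped Matrix

/-- Column index type for the matrix `λ`: the symbol `0`, the holomorphic symbols `α`
(`1 ≤ α ≤ n`) and the antiholomorphic symbols `ᾱ` (`1 ≤ α ≤ n`). -/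
abbrev FefCol (n : ℕ) := Unit ⊕ Fin n ⊕ Fin n

/-- The column symbol `0`. -/
def col0 {n : ℕ} : FefCol n := Sum.inl ()

/-- The column symbol `α`. -/
def colH {n : ℕ} (α : Fin n) : FefCol n := Sum.inr (Sum.inl α)

/-- The column symbol `ᾱ`. -/
def colA {n : ℕ} (α : Fin n) : FefCol n := Sum.inr (Sum.inr α)

namespace FefAux
variable {n : ℕ}
abbrev P (n : ℕ) := FefCol n ⊕ Unit

def fU (lam : Matrix (Fin (2*n+1)) (FefCol n) ℂ) : Matrix (Fin (2*n+1+1)) (P n) ℂ :=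
  Matrix.of fun i q => Fin.lastCases (Sum.elim (fun _ => (0:ℂ)) (fun _ => 1) q)
    (fun A => Sum.elim (fun p => lam A p) (fun _ => 0) q) i

def fV (mu : Matrix (FefCol n) (Fin (2*n+1)) ℂ) : Matrix (P n) (Fin (2*n+1+1)) ℂ :=
  Matrix.of fun q i => Fin.lastCases (Sum.elim (fun _ => (0:ℂ)) (fun _ => 1) q)
    (fun A => Sum.elim (fun p => mu p A) (fun _ => 0) q) i

@[simp] lemma fU_castSucc_inl (lam : Matrix (Fin (2*n+1)) (FefCol n) ℂ) (A : Fin (2*n+1)) (p : FefCol n) :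
    fU lam A.castSucc (Sum.inl p) = lam A p := by simp [fU]
@[simp] lemma fU_castSucc_inr (lam : Matrix (Fin (2*n+1)) (FefCol n) ℂ) (A : Fin (2*n+1)) (u : Unit) :
    fU lam A.castSucc (Sum.inr u) = 0 := by simp [fU]
@[simp] lemma fU_last_inl (lam : Matrix (Fin (2*n+1)) (FefCol n) ℂ) (p : FefCol n) :
    fU lam (Fin.last (2*n+1)) (Sum.inl p) = 0 := by simp [fU]
@[simp] lemma fU_last_inr (lam : Matrix (Fin (2*n+1)) (FefCol n) ℂ) (u : Unit) :
    fU lam (Fin.last (2*n+1)) (Sum.inr u) = 1 := by simp [fU]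
@[simp] lemma fV_castSucc_inl (mu : Matrix (FefCol n) (Fin (2*n+1)) ℂ) (A : Fin (2*n+1)) (p : FefCol n) :
    fV mu (Sum.inl p) A.castSucc = mu p A := by simp [fV]
@[simp] lemma fV_castSucc_inr (mu : Matrix (FefCol n) (Fin (2*n+1)) ℂ) (A : Fin (2*n+1)) (u : Unit) :
    fV mu (Sum.inr u) A.castSucc = 0 := by simp [fV]
@[simp] lemma fV_last_inl (mu : Matrix (FefCol n) (Fin (2*n+1)) ℂ) (p : FefCol n) :
    fV mu (Sum.inl p) (Fin.last (2*n+1)) = 0 := by simp [fV]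
@[simp] lemma fV_last_inr (mu : Matrix (FefCol n) (Fin (2*n+1)) ℂ) (u : Unit) :
    fV mu (Sum.inr u) (Fin.last (2*n+1)) = 1 := by simp [fV]

lemma fUV (lam : Matrix (Fin (2*n+1)) (FefCol n) ℂ) (mu : Matrix (FefCol n) (Fin (2*n+1)) ℂ)
    (h : lam * mu = 1) : fU lam * fV mu = 1 := by
  ext i j
  have hh : ∀ A B, ∑ p, lam A p * mu p B = (if A = B then (1:ℂ) else 0) := by
    intro A B
    have := congrFun (congrFun h A) B
    rwa [Matrix.mul_apply, Matrix.one_apply] at this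
  induction i using Fin.lastCases with
  | last =>
    induction j using Fin.lastCases with
    | last => simp [Matrix.mul_apply, Fintype.sum_sum_type, Matrix.one_apply]
    | cast B => simp [Matrix.mul_apply, Fintype.sum_sum_type, Matrix.one_apply, (Fin.castSucc_lt_last B).ne']
  | cast A =>
    induction j using Fin.lastCases with
    | last => simp [Matrix.mul_apply, Fintype.sum_sum_type, Matrix.one_apply, (Fin.castSucc_lt_last A).ne]
    | cast B => simp [Matrix.mul_apply, Fintype.sum_sum_type, hh, Matrix.one_apply, Fin.castSucc_inj]

lemma fVU (lam : Matrix (Fin (2*n+1)) (FefCol n) ℂ) (mu : Matrix (FefCol n) (Fin (2*n+1)) ℂ)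
    (h : mu * lam = 1) : fV mu * fU lam = 1 := by
  ext p q
  have hh : ∀ p q, ∑ A, mu p A * lam A q = (1 : Matrix (FefCol n) (FefCol n) ℂ) p q := by
    intro p q
    have := congrFun (congrFun h p) q
    rwa [Matrix.mul_apply] at this
  cases p with
  | inl p =>
    cases q with
    | inl q =>
      rw [Matrix.mul_apply, Fin.sum_univ_castSucc]
      simp [hh, Matrix.one_apply]
    | inr u =>
      rw [Matrix.mul_apply, Fin.sum_univ_castSucc]
      simp [Matrix.one_apply]
  | inr u =>
    cases q with
    | inl q =>
      rw [Matrix.mul_apply, Fin.sum_univ_castSucc]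
      simp [Matrix.one_apply]
    | inr v =>
      rw [Matrix.mul_apply, Fin.sum_univ_castSucc]
      simp [Matrix.one_apply]


noncomputable def fK (g : Matrix (Fin n) (Fin n) ℂ) (τ : FefCol n → ℂ) (c : ℂ) : Matrix (P n) (P n) ℂ :=
  Matrix.of fun p q => match p, q with
  | .inl (.inl _), .inl (.inl _) => 2 * τ col0
  | .inl (.inl _), .inl (.inr (.inl β)) => τ (colH β)
  | .inl (.inl _), .inl (.inr (.inr β)) => τ (colA β)
  | .inl (.inl _), .inr _ => 1 / c
  | .inl (.inr (.inl α)), .inl (.inl _) => τ (colH α)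
  | .inl (.inr (.inl _)), .inl (.inr (.inl _)) => 0
  | .inl (.inr (.inl α)), .inl (.inr (.inr β)) => g α β
  | .inl (.inr (.inl _)), .inr _ => 0
  | .inl (.inr (.inr α)), .inl (.inl _) => τ (colA α)
  | .inl (.inr (.inr α)), .inl (.inr (.inl β)) => g β α
  | .inl (.inr (.inr _)), .inl (.inr (.inr _)) => 0
  | .inl (.inr (.inr _)), .inr _ => 0
  | .inr _, .inl (.inl _) => 1 / c
  | .inr _, _ => 0

noncomputable def fX (ginv : Matrix (Fin n) (Fin n) ℂ) (τ : FefCol n → ℂ) (c : ℂ) : Matrix (P n) (P n) ℂ :=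
  Matrix.of fun p q => match p, q with
  | .inl (.inl _), .inr _ => c
  | .inr _, .inl (.inl _) => c
  | .inl (.inr (.inl α)), .inl (.inr (.inr β)) => ginv α β
  | .inl (.inr (.inr β)), .inl (.inr (.inl α)) => ginv α β
  | .inl (.inr (.inl α)), .inr _ => -c * ∑ β, ginv α β * τ (colA β)
  | .inr _, .inl (.inr (.inl α)) => -c * ∑ β, ginv α β * τ (colA β)
  | .inl (.inr (.inr β)), .inr _ => -c * ∑ α, ginv α β * τ (colH α)
  | .inr _, .inl (.inr (.inr β)) => -c * ∑ α, ginv α β * τ (colH α)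
  | .inr _, .inr _ => -2*c^2*τ col0 + 2*c^2 * ∑ α, ∑ β, ginv α β * τ (colH α) * τ (colA β)
  | _, _ => 0

lemma sumH (g ginv : Matrix (Fin n) (Fin n) ℂ)
    (h1 : ∀ α γ : Fin n, (∑ β, ginv α β * g γ β) = if α = γ then 1 else 0)
    (v : Fin n → ℂ) (α : Fin n) :
    ∑ β, g α β * (∑ γ, ginv γ β * v γ) = v α := by
  have : ∀ β, g α β * (∑ γ, ginv γ β * v γ) = ∑ γ, ginv γ β * g α β * v γ := by
    intro β; rw [Finset.mul_sum]; exact Finset.sum_congr rfl fun γ _ => by ring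
  simp only [this]
  rw [Finset.sum_comm]
  have : ∀ γ, (∑ β, ginv γ β * g α β * v γ) = (if γ = α then 1 else 0) * v γ := by
    intro γ; rw [← Finset.sum_mul, h1]
  simp [this]

lemma sumA (g ginv : Matrix (Fin n) (Fin n) ℂ)
    (h2 : ∀ α γ : Fin n, (∑ β, g β α * ginv β γ) = if α = γ then 1 else 0)
    (v : Fin n → ℂ) (α : Fin n) :
    ∑ β, g β α * (∑ γ, ginv β γ * v γ) = v α := by
  have : ∀ β, g β α * (∑ γ, ginv β γ * v γ) = ∑ γ, g β α * ginv β γ * v γ := by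
    intro β; rw [Finset.mul_sum]; exact Finset.sum_congr rfl fun γ _ => by ring
  simp only [this]
  rw [Finset.sum_comm]
  have : ∀ γ, (∑ β, g β α * ginv β γ * v γ) = (if α = γ then 1 else 0) * v γ := by
    intro γ; rw [← Finset.sum_mul, h2]
  simp [this]

lemma fKX (g ginv : Matrix (Fin n) (Fin n) ℂ) (τ : FefCol n → ℂ) (c : ℂ) (hc : c ≠ 0)
    (h1 : ∀ α γ : Fin n, (∑ β, ginv α β * g γ β) = if α = γ then 1 else 0)
    (h2 : ∀ α γ : Fin n, (∑ β, g β α * ginv β γ) = if α = γ then 1 else 0) :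
    fK g τ c * fX ginv τ c = 1 := by
  have hS1 : ∑ x, τ (colH x) * (c * ∑ β, ginv x β * τ (colA β))
      = c * ∑ a, ∑ b, ginv a b * τ (colH a) * τ (colA b) := by
    rw [Finset.mul_sum]
    refine Finset.sum_congr rfl fun x _ => ?_
    rw [Finset.mul_sum, Finset.mul_sum, Finset.mul_sum]
    exact Finset.sum_congr rfl fun b _ => by ring
  have hS2 : ∑ x, τ (colA x) * (c * ∑ a, ginv a x * τ (colH a))
      = c * ∑ a, ∑ b, ginv a b * τ (colH a) * τ (colA b) := by
    have e1 : ∀ x, τ (colA x) * (c * ∑ a, ginv a x * τ (colH a))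
        = ∑ a, c * (ginv a x * τ (colH a) * τ (colA x)) := by
      intro x
      rw [Finset.mul_sum, Finset.mul_sum]
      exact Finset.sum_congr rfl fun a _ => by ring
    simp only [e1]
    rw [Finset.sum_comm, Finset.mul_sum]
    refine Finset.sum_congr rfl fun a _ => ?_
    rw [Finset.mul_sum]
  have hH : ∀ α' : Fin n, ∑ x, g α' x * (c * ∑ a, ginv a x * τ (colH a)) = c * τ (colH α') := by
    intro α'
    have h := sumH g ginv h1 (fun a => τ (colH a)) α'
    calc ∑ x, g α' x * (c * ∑ a, ginv a x * τ (colH a))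
        = c * ∑ x, g α' x * ∑ a, ginv a x * τ (colH a) := by
          rw [Finset.mul_sum]; exact Finset.sum_congr rfl fun x _ => by ring
      _ = c * τ (colH α') := by rw [h]
  have hA : ∀ α' : Fin n, ∑ x, g x α' * (c * ∑ b, ginv x b * τ (colA b)) = c * τ (colA α') := by
    intro α'
    have h := sumA g ginv h2 (fun b => τ (colA b)) α'
    calc ∑ x, g x α' * (c * ∑ b, ginv x b * τ (colA b))
        = c * ∑ x, g x α' * ∑ b, ginv x b * τ (colA b) := by
          rw [Finset.mul_sum]; exact Finset.sum_congr rfl fun x _ => by ring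
      _ = c * τ (colA α') := by rw [h]
  ext p q
  rw [Matrix.mul_apply]
  rcases p with (⟨⟩ | α' | α') | ⟨⟩ <;> rcases q with (⟨⟩ | γ' | γ') | ⟨⟩ <;>
    simp only [fK, fX, Fintype.sum_sum_type, Matrix.of_apply, Matrix.one_apply,
      Finset.univ_unique, PUnit.default_eq_unit, Finset.sum_singleton, mul_zero, zero_mul,
      Finset.sum_const_zero, add_zero, zero_add, one_div, neg_mul, mul_neg, Sum.inl.injEq,
      Sum.inr.injEq, reduceCtorEq, ite_false, ite_true]
  · exact inv_mul_cancel₀ hc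
  · rw [inv_mul_cancel_left₀ hc, ← sub_eq_add_neg, sub_eq_zero]
    exact Finset.sum_congr rfl fun x _ => mul_comm _ _
  · rw [inv_mul_cancel_left₀ hc, ← sub_eq_add_neg, sub_eq_zero]
    exact Finset.sum_congr rfl fun x _ => mul_comm _ _
  · rw [Finset.sum_neg_distrib, Finset.sum_neg_distrib, hS1, hS2]
    field_simp
    ring
  · rw [neg_zero, add_zero,
      show (∑ x, g α' x * ginv γ' x) = ∑ x, ginv γ' x * g α' x from
        Finset.sum_congr rfl fun x _ => mul_comm _ _, h1 γ' α']
    by_cases h : α' = γ'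
    · subst h; simp
    · simp [h, Ne.symm h]
  · simp
  · simp only [neg_zero, Finset.sum_const_zero, zero_add, Finset.sum_neg_distrib]
    rw [hH α']
    ring
  · simp
  · rw [neg_zero, add_zero]
    exact h2 α' γ'
  · simp only [neg_zero, Finset.sum_const_zero, add_zero, Finset.sum_neg_distrib]
    rw [hA α']
    ring
  · simp
  · simp
  · exact inv_mul_cancel₀ hc

lemma fF (lam : Matrix (Fin (2*n+1)) (FefCol n) ℂ) (g : Matrix (Fin n) (Fin n) ℂ)
    (τ : FefCol n → ℂ) (σ : Fin (2*n+1) → ℂ) (c : ℂ)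
    (F : Matrix (Fin (2*n+1+1)) (Fin (2*n+1+1)) ℂ)
    (hσ : ∀ B, σ B = ∑ p, lam B p * τ p)
    (hF1 : ∀ A B : Fin (2*n+1), F A.castSucc B.castSucc
      = (∑ α, ∑ β, g α β * (lam A (colH α) * lam B (colA β)
          + lam B (colH α) * lam A (colA β)))
        + lam A col0 * σ B + lam B col0 * σ A)
    (hF2 : ∀ A : Fin (2*n+1), F A.castSucc (Fin.last (2*n+1)) = lam A col0 / c)
    (hF3 : ∀ A : Fin (2*n+1), F (Fin.last (2*n+1)) A.castSucc = lam A col0 / c)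
    (hF4 : F (Fin.last (2*n+1)) (Fin.last (2*n+1)) = 0) :
    F = fU lam * fK g τ c * (fU lam)ᵀ := by
  ext i j
  have mulapp : ∀ i j, (fU lam * fK g τ c * (fU lam)ᵀ) i j
      = ∑ q, (∑ p, fU lam i p * fK g τ c p q) * fU lam j q := by
    intro i j
    rw [Matrix.mul_apply]
    exact Finset.sum_congr rfl fun q _ => by rw [Matrix.mul_apply, Matrix.transpose_apply]
  rw [mulapp]
  induction i using Fin.lastCases with
  | last =>
    induction j using Fin.lastCases with
    | last =>
      rw [hF4]
      simp [fK, Fintype.sum_sum_type]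
    | cast B =>
      rw [hF3]
      simp [fK, col0, Fintype.sum_sum_type, div_eq_mul_inv, mul_comm]
  | cast A =>
    induction j using Fin.lastCases with
    | last =>
      rw [hF2]
      simp [fK, col0, Fintype.sum_sum_type, div_eq_mul_inv]
    | cast B =>
      rw [hF1, hσ A, hσ B]
      simp only [fK, Fintype.sum_sum_type, Matrix.of_apply, fU_castSucc_inl, fU_castSucc_inr,
        Finset.univ_unique, PUnit.default_eq_unit, Finset.sum_singleton, mul_zero, zero_mul,
        Finset.sum_const_zero, add_zero, zero_add]
      simp only [col0, colH, colA, mul_add, add_mul, Finset.sum_add_distrib, Finset.mul_sum,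
        Finset.sum_mul]
      conv_lhs => rw [Finset.sum_comm]
      simp only [mul_comm, mul_left_comm]
      ring_nf

end FefAux

theorem fefferman_inverse_recovers_inverse_levi (n : ℕ) (hn : 1 ≤ n)
    (g : Matrix (Fin n) (Fin n) ℂ) (hg : IsUnit g)
    (lam : Matrix (Fin (2*n+1)) (FefCol n) ℂ)
    (hlam : ∃ mu : Matrix (FefCol n) (Fin (2*n+1)) ℂ, lam * mu = 1 ∧ mu * lam = 1)
    (σ : Fin (2*n+1) → ℂ)
    (F : Matrix (Fin (2*n+1+1)) (Fin (2*n+1+1)) ℂ)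
    (hF1 : ∀ A B : Fin (2*n+1), F A.castSucc B.castSucc
      = (∑ α, ∑ β, g α β * (lam A (colH α) * lam B (colA β)
          + lam B (colH α) * lam A (colA β)))
        + lam A col0 * σ B + lam B col0 * σ A)
    (hF2 : ∀ A : Fin (2*n+1), F A.castSucc (Fin.last (2*n+1)) = lam A col0 / ((n : ℂ) + 2))
    (hF3 : ∀ A : Fin (2*n+1), F (Fin.last (2*n+1)) A.castSucc = lam A col0 / ((n : ℂ) + 2))
    (hF4 : F (Fin.last (2*n+1)) (Fin.last (2*n+1)) = 0)
    (hFinv : IsUnit F)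
    (ginv : Matrix (Fin n) (Fin n) ℂ)
    (hginv : ∀ α γ : Fin n, (∑ β, ginv α β * g γ β) = if α = γ then 1 else 0)
    (α β : Fin n) :
    (∑ A : Fin (2*n+1), ∑ B : Fin (2*n+1),
        F⁻¹ A.castSucc B.castSucc * lam A (colH α) * lam B (colA β)) = ginv α β
    ∧ (∑ A : Fin (2*n+1), ∑ B : Fin (2*n+1),
        F⁻¹ A.castSucc B.castSucc * lam A (colH α) * lam B (colH β)) = 0 := by
  classical
  obtain ⟨mu, hlam1, hlam2⟩ := hlam
  set c : ℂ := (n:ℂ) + 2 with hcdef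
  have hc : c ≠ 0 := by
    have h2' : ((n+2 : ℕ) : ℂ) ≠ 0 := Nat.cast_ne_zero.mpr (by omega)
    rw [hcdef]
    simpa using h2'
  set τ : FefCol n → ℂ := fun p => ∑ A, mu p A * σ A with hτ
  have hσ : ∀ B, σ B = ∑ p, lam B p * τ p := by
    intro B
    have h := congrFun (congrFun hlam1 B)
    calc σ B = ∑ A, (∑ p, lam B p * mu p A) * σ A := by
          have hBA : ∀ A, (∑ p, lam B p * mu p A) = if B = A then 1 else 0 := by
            intro A
            have := h A
            rwa [Matrix.mul_apply, Matrix.one_apply] at this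
          simp [hBA]
      _ = ∑ p, lam B p * τ p := by
          simp only [Finset.sum_mul, hτ, Finset.mul_sum]
          rw [Finset.sum_comm]
          exact Finset.sum_congr rfl fun p _ => Finset.sum_congr rfl fun A _ => by ring
  have hg1 : ginv * gᵀ = 1 := by
    ext a b
    simpa [Matrix.mul_apply, Matrix.one_apply] using hginv a b
  have hg2 : gᵀ * ginv = 1 := mul_eq_one_comm.mp hg1
  have h2 : ∀ a b : Fin n, (∑ β, g β a * ginv β b) = if a = b then 1 else 0 := by
    intro a b
    have := congrFun (congrFun hg2 a) b
    simpa [Matrix.mul_apply, Matrix.one_apply] using this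
  have hKX := FefAux.fKX g ginv τ c hc hginv h2
  have hFrep := FefAux.fF lam g τ σ c F hσ hF1 hF2 hF3 hF4
  set U := FefAux.fU lam with hU
  set V := FefAux.fV mu with hV
  set K := FefAux.fK g τ c with hK
  set X := FefAux.fX ginv τ c with hX
  have hUV : U * V = 1 := FefAux.fUV lam mu hlam1
  have hVU : V * U = 1 := FefAux.fVU lam mu hlam2
  have h0 : Uᵀ * Vᵀ = 1 := by rw [← Matrix.transpose_mul, hVU, Matrix.transpose_one]
  have hdet := (Matrix.isUnit_iff_isUnit_det F).mp hFinv
  have hFi1 : F * F⁻¹ = 1 := Matrix.mul_nonsing_inv F hdet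
  have hFi2 : F⁻¹ * F = 1 := Matrix.nonsing_inv_mul F hdet
  have e1 : U * K * Uᵀ * Vᵀ = U * K := by
    rw [Matrix.mul_assoc (U*K), h0, Matrix.mul_one]
  have e2 : F * Vᵀ = U * K := by rw [hFrep]; exact e1
  have hYK : (Uᵀ * F⁻¹ * U) * K = 1 := by
    calc (Uᵀ * F⁻¹ * U) * K = Uᵀ * (F⁻¹ * (U * K)) := by simp only [Matrix.mul_assoc]
      _ = Uᵀ * (F⁻¹ * (F * Vᵀ)) := by rw [e2]
      _ = Uᵀ * (F⁻¹ * F * Vᵀ) := by rw [Matrix.mul_assoc]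
      _ = Uᵀ * Vᵀ := by rw [hFi2, Matrix.one_mul]
      _ = 1 := h0
  have hYX : Uᵀ * F⁻¹ * U = X := by
    calc Uᵀ * F⁻¹ * U = (Uᵀ * F⁻¹ * U) * (K * X) := by rw [hKX, Matrix.mul_one]
      _ = ((Uᵀ * F⁻¹ * U) * K) * X := by simp only [Matrix.mul_assoc]
      _ = X := by rw [hYK, Matrix.one_mul]
  have hT : ∀ p q : FefCol n, (∑ A : Fin (2*n+1), ∑ B : Fin (2*n+1),
      F⁻¹ A.castSucc B.castSucc * lam A p * lam B q) = X (Sum.inl p) (Sum.inl q) := by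
    intro p q
    rw [← hYX]
    have inner : ∀ j, (Uᵀ * F⁻¹) (Sum.inl p) j = ∑ A, lam A p * F⁻¹ A.castSucc j := by
      intro j
      rw [Matrix.mul_apply, Fin.sum_univ_castSucc]
      simp [hU]
    conv_rhs => rw [Matrix.mul_apply, Fin.sum_univ_castSucc]
    conv_rhs => simp only [inner]
    conv_rhs => simp only [inner, hU, FefAux.fU_castSucc_inl, FefAux.fU_last_inl, mul_zero,
      add_zero, Finset.sum_mul]
    rw [Finset.sum_comm]
    exact Finset.sum_congr rfl fun A _ => Finset.sum_congr rfl fun B _ => by ring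
  constructor
  · rw [hT (colH α) (colA β)]
    simp [hX, FefAux.fX, colH, colA]
  · rw [hT (colH α) (colH β)]
    simp [hX, FefAux.fX, colH, colA]
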